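/- Let A be an n×n real skew-symmetric matrix with n ≥ 2. If n is even, then A is not non-redundant (some Nash equilibrium of A is not completely mixed). If n ≥ 3 is odd, then A is non-redundant if and only if rank(A) = n−1 and the equation xᵀA = 0ᵀ has a solution x with every coordinate strictly positive. -/

import Mathlib

open Matrix

/-- `π` is a Nash equilibrium of the (skew-symmetric) pay-off matrix `A`:
`π ∈ S_n⁺` and `πᵀAy ≥ 0` for every `y ∈ S_n⁺`. -/
def IsNashEq {n : ℕ} (A : Matrix (Fin n) (Fin n) ℝ) (π : Fin n → ℝ) : Prop :=
  (∑ i, π i = 1) ∧ (∀ i, 0 ≤ π i) ∧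
    ∀ y : Fin n → ℝ, (∑ i, y i = 1) → (∀ i, 0 ≤ y i) → 0 ≤ π ᵥ* A ⬝ᵥ y

section Aux

variable {n : ℕ}

lemma skew_quad (A : Matrix (Fin n) (Fin n) ℝ) (hskew : Aᵀ = -A) (x : Fin n → ℝ) :
    x ⬝ᵥ (A *ᵥ x) = 0 := by
  have h1 : x ᵥ* A = -(A *ᵥ x) := by
    rw [← mulVec_transpose, hskew, neg_mulVec]
  have h2 : x ⬝ᵥ (A *ᵥ x) = (x ᵥ* A) ⬝ᵥ x := by rw [dotProduct_mulVec]
  rw [h1, neg_dotProduct, dotProduct_comm] at h2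
  rw [dotProduct_comm]
  linarith

lemma slack (x y : Fin n → ℝ) (hx : ∀ i, 0 < x i) (hy : ∀ i, y i ≤ 0)
    (h : x ⬝ᵥ y = 0) : y = 0 := by
  funext i
  have h0 : ∀ j ∈ Finset.univ, x j * y j = 0 := by
    refine (Finset.sum_eq_zero_iff_of_nonpos
      (fun j _ => mul_nonpos_of_nonneg_of_nonpos (hx j).le (hy j))).mp ?_
    simpa [dotProduct] using h
  rcases mul_eq_zero.mp (h0 i (Finset.mem_univ i)) with h | h
  · exact absurd h (hx i).ne'
  · exact h

lemma nash_iff (A : Matrix (Fin n) (Fin n) ℝ) (hskew : Aᵀ = -A) (π : Fin n → ℝ) :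
    IsNashEq A π ↔ ((∑ i, π i = 1) ∧ (∀ i, 0 ≤ π i) ∧ ∀ j, (A *ᵥ π) j ≤ 0) := by
  have hv : π ᵥ* A = -(A *ᵥ π) := by
    rw [← mulVec_transpose, hskew, neg_mulVec]
  constructor
  · rintro ⟨h1, h2, h3⟩
    refine ⟨h1, h2, fun j => ?_⟩
    have hy1 : ∑ i, (Pi.single j 1 : Fin n → ℝ) i = 1 := by
      simp [Finset.sum_pi_single']
    have hy2 : ∀ i, (0:ℝ) ≤ (Pi.single j 1 : Fin n → ℝ) i := by
      intro i
      rcases eq_or_ne i j with rfl | h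
      · simp
      · simp [Pi.single_eq_of_ne h]
    have := h3 _ hy1 hy2
    rw [hv, neg_dotProduct, dotProduct_single_one] at this
    linarith
  · rintro ⟨h1, h2, h3⟩
    refine ⟨h1, h2, fun y hy1 hy2 => ?_⟩
    rw [hv, neg_dotProduct]
    rw [neg_nonneg]
    exact Finset.sum_nonpos fun i _ =>
      mul_nonpos_of_nonpos_of_nonneg (h3 i) (hy2 i)

lemma exists_nash (hn : n ≠ 0) (A : Matrix (Fin n) (Fin n) ℝ) (hskew : Aᵀ = -A) :
    ∃ π ∈ stdSimplex ℝ (Fin n), ∀ i, (A *ᵥ π) i ≤ 0 := by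
  by_contra hcon
  push_neg at hcon
  set C : Set (Fin n → ℝ) := (A *ᵥ ·) '' stdSimplex ℝ (Fin n) with hC
  set D : Set (Fin n → ℝ) := {z | ∀ i, z i ≤ 0} with hD
  have hCc : Convex ℝ C := (convex_stdSimplex ℝ _).linear_image A.mulVecLin
  have hCk : IsCompact C :=
    (isCompact_stdSimplex _ _).image A.mulVecLin.continuous_of_finiteDimensional
  have hDeq : D = ⋂ i, {z : Fin n → ℝ | z i ≤ 0} := by
    ext z; simp [hD, Set.mem_iInter]
  have hDc : Convex ℝ D := by
    rw [hDeq]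
    exact convex_iInter fun i =>
      convex_halfSpace_le (LinearMap.isLinear (LinearMap.proj i)) 0
  have hDcl : IsClosed D := by
    rw [hDeq]
    exact isClosed_iInter fun i => isClosed_le (continuous_apply i) continuous_const
  have hdisj : Disjoint D C := by
    rw [Set.disjoint_left]
    rintro z hzD ⟨π, hπ, rfl⟩
    obtain ⟨i, hi⟩ := hcon π hπ
    exact absurd (hzD i) (not_le.mpr hi)
  obtain ⟨f, u, v, hfD, huv, hfC⟩ :=
    geometric_hahn_banach_closed_compact hDc hDcl hCc hCk hdisj
  set c : Fin n → ℝ := fun i => f (Pi.single i 1) with hc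
  have hfrep : ∀ z : Fin n → ℝ, f z = z ⬝ᵥ c := by
    intro z
    have hsingle : ∀ i, f (Pi.single i (z i)) = z i * c i := by
      intro i
      have hsm : Pi.single i (z i) = z i • (Pi.single i 1 : Fin n → ℝ) := by
        ext j
        rcases eq_or_ne i j with rfl | h
        · simp
        · simp [Pi.single_eq_of_ne (Ne.symm h), Pi.single_eq_of_ne (Ne.symm h)]
      rw [hsm, f.map_smul, smul_eq_mul]
    conv_lhs => rw [← Finset.univ_sum_single z]
    rw [map_sum]
    simp only [hsingle]
    rfl
  have hu : 0 < u := by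
    have := hfD 0 (fun i => le_refl 0)
    simpa using this
  have hcnn : ∀ i, 0 ≤ c i := by
    intro i
    by_contra hci
    push_neg at hci
    set t : ℝ := 2 * u / (-(c i)) with ht
    have ht0 : 0 < t := div_pos (by linarith) (by linarith)
    have hz : t • (-(Pi.single i 1 : Fin n → ℝ)) ∈ D := by
      intro j
      simp only [Pi.smul_apply, Pi.neg_apply, smul_eq_mul]
      have h01 : 0 ≤ (Pi.single i 1 : Fin n → ℝ) j := by
        rcases eq_or_ne j i with rfl | h
        · simp
        · simp [Pi.single_eq_of_ne h]
      nlinarith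
    have hlt := hfD _ hz
    have hfi : f (-(Pi.single i 1 : Fin n → ℝ)) = -(c i) := by
      rw [f.map_neg]
    rw [f.map_smul, hfi, smul_eq_mul, ht, div_mul_cancel₀] at hlt
    · linarith
    · linarith
  have hCne : (A *ᵥ Pi.single ⟨0, Nat.pos_of_ne_zero hn⟩ 1) ∈ C :=
    ⟨_, single_mem_stdSimplex ℝ _, rfl⟩
  have hsc : 0 < ∑ i, c i := by
    rcases (Finset.sum_nonneg fun i _ => hcnn i).lt_or_eq with h | h
    · exact h
    · exfalso
      have hc0 : ∀ i, c i = 0 := by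
        intro i
        have := (Finset.sum_eq_zero_iff_of_nonneg (fun i _ => hcnn i)).mp h.symm
        exact this i (Finset.mem_univ i)
      have := hfC _ hCne
      rw [hfrep] at this
      have : (0:ℝ) < v → False := by
        intro _
        simp only [dotProduct] at this
        simp [hc0] at this
        linarith
      exact this (lt_trans hu huv)
  set y : Fin n → ℝ := (∑ i, c i)⁻¹ • c with hy
  have hyΔ : y ∈ stdSimplex ℝ (Fin n) := by
    constructor
    · intro i
      exact mul_nonneg (inv_nonneg.mpr hsc.le) (hcnn i)
    · simp [hy, ← Finset.mul_sum, inv_mul_cancel₀ hsc.ne']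
  have hmem : (A *ᵥ y) ∈ C := ⟨y, hyΔ, rfl⟩
  have hval := hfC _ hmem
  rw [hfrep] at hval
  have hzero : (A *ᵥ y) ⬝ᵥ c = 0 := by
    have : c = (∑ i, c i) • y := by
      rw [hy, smul_smul, mul_inv_cancel₀ hsc.ne', one_smul]
    rw [this, dotProduct_smul, dotProduct_comm, skew_quad A hskew y]
    simp
  rw [hzero] at hval
  linarith

lemma skew_rank_even (A : Matrix (Fin n) (Fin n) ℝ) (hskew : Aᵀ = -A) :
    Even A.rank := by
  classical
  set K := LinearMap.range A.mulVecLin with hK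
  show Even (Module.finrank ℝ K)
  set r := Module.finrank ℝ K with hr
  let b : Module.Basis (Fin r) ℝ K := Module.finBasis ℝ K
  set P : Matrix (Fin n) (Fin r) ℝ := fun i k => (b k : Fin n → ℝ) i with hP
  set M : Matrix (Fin r) (Fin r) ℝ := Pᵀ * A * P with hM
  have hMskew : Mᵀ = -M := by
    rw [hM, transpose_mul, transpose_mul, transpose_transpose, hskew]
    simp [Matrix.mul_assoc, Matrix.neg_mul, Matrix.mul_neg]
  have hPt : ∀ (w : Fin n → ℝ) (k : Fin r), (Pᵀ *ᵥ w) k = (b k : Fin n → ℝ) ⬝ᵥ w := by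
    intro w k
    simp [mulVec, dotProduct, hP, transpose_apply]
    rfl
  have hPsum : ∀ c : Fin r → ℝ, P *ᵥ c = ∑ k, c k • (b k : Fin n → ℝ) := by
    intro c
    funext i
    simp [mulVec, dotProduct, hP, mul_comm, Finset.sum_apply]
  have hinj : ∀ c : Fin r → ℝ, M *ᵥ c = 0 → c = 0 := by
    intro c hc
    set u : Fin n → ℝ := P *ᵥ c with hu
    have hmm : M *ᵥ c = Pᵀ *ᵥ (A *ᵥ u) := by
      rw [hM, hu, ← mulVec_mulVec, ← mulVec_mulVec]
    rw [hmm] at hc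
    have hk0 : ∀ k, (b k : Fin n → ℝ) ⬝ᵥ (A *ᵥ u) = 0 := by
      intro k
      rw [← hPt]
      exact congrFun hc k
    have hAuK : A *ᵥ u ∈ K := ⟨u, by simp [mulVecLin_apply]⟩
    set z : K := ⟨A *ᵥ u, hAuK⟩ with hz
    have hzrep : ((∑ k, b.repr z k • b k : K) : Fin n → ℝ) = A *ᵥ u := by
      rw [b.sum_repr z]
    have hcoe : ((∑ k, b.repr z k • b k : K) : Fin n → ℝ)
        = ∑ k, b.repr z k • (b k : Fin n → ℝ) := by
      push_cast [Submodule.coe_sum]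
      rfl
    have hdot : (∑ k, b.repr z k • (b k : Fin n → ℝ)) ⬝ᵥ (A *ᵥ u) = 0 := by
      simp only [dotProduct, Finset.sum_apply, Pi.smul_apply, smul_eq_mul, Finset.sum_mul]
      rw [Finset.sum_comm]
      refine Finset.sum_eq_zero fun k _ => ?_
      simp only [mul_assoc, ← Finset.mul_sum]
      have hk := hk0 k
      simp only [dotProduct] at hk
      rw [hk, mul_zero]
    have hAu0 : A *ᵥ u = 0 := by
      refine dotProduct_self_eq_zero.mp ?_
      nth_rewrite 1 [← hzrep]
      rw [hcoe]
      exact hdot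
    have huK : u ∈ K := by
      rw [hu, hPsum]
      exact Submodule.sum_mem _ fun k _ => K.smul_mem _ (b k).2
    obtain ⟨w', hw'⟩ := huK
    rw [mulVecLin_apply] at hw'
    have hu0 : u = 0 := by
      refine dotProduct_self_eq_zero.mp ?_
      rw [← hw', dotProduct_comm, dotProduct_mulVec, ← mulVec_transpose, hskew, neg_mulVec,
        hw', hAu0]
      simp
    have hsum : ∑ k, c k • (b k : Fin n → ℝ) = 0 := by
      rw [← hPsum, ← hu, hu0]
    have hind : LinearIndependent ℝ (fun k => (b k : Fin n → ℝ)) :=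
      b.linearIndependent.map' K.subtype K.ker_subtype
    exact funext (Fintype.linearIndependent_iff.mp hind c hsum)
  have hinj' : Function.Injective M.mulVec := by
    intro x y hxy
    have h0 : M *ᵥ (x - y) = 0 := by rw [mulVec_sub, hxy, sub_self]
    exact sub_eq_zero.mp (hinj _ h0)
  have hunit : IsUnit M := mulVec_injective_iff_isUnit.mp hinj'
  have hdet : M.det ≠ 0 := by
    intro h
    rw [Matrix.isUnit_iff_isUnit_det, h] at hunit
    exact hunit.ne_zero rfl
  by_contra hodd
  rw [Nat.not_even_iff_odd] at hodd
  have hh : M.det = -M.det := by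
    conv_lhs => rw [← Matrix.det_transpose, hMskew, Matrix.det_neg]
    simp [Fintype.card_fin, hodd.neg_one_pow]
  apply hdet
  linarith

/-- If every Nash equilibrium of a skew-symmetric `A` is completely mixed,
then `A.rank = n - 1` and the kernel contains a strictly positive vector. -/
lemma key_lemma (hn : 2 ≤ n) (A : Matrix (Fin n) (Fin n) ℝ) (hskew : Aᵀ = -A)
    (hcm : ∀ π : Fin n → ℝ, IsNashEq A π → ∀ i, 0 < π i) :
    A.rank = n - 1 ∧ ∃ x : Fin n → ℝ, A *ᵥ x = 0 ∧ ∀ i, 0 < x i := by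
  have hn0 : n ≠ 0 := by omega
  obtain ⟨π, hπΔ, hπle⟩ := exists_nash hn0 A hskew
  have hπnash : IsNashEq A π := (nash_iff A hskew π).mpr ⟨hπΔ.2, hπΔ.1, hπle⟩
  have hπpos : ∀ i, 0 < π i := hcm π hπnash
  have hAπ : A *ᵥ π = 0 :=
    slack π (A *ᵥ π) hπpos hπle (skew_quad A hskew π)
  refine ⟨?_, π, hAπ, hπpos⟩
  -- show rank = n - 1 by showing ker = span {π}
  have hker : ∀ v : Fin n → ℝ, A *ᵥ v = 0 → ∃ t : ℝ, v = t • π := by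
    intro v hv
    by_contra hvs
    push_neg at hvs
    set u : Fin n → ℝ := v - (∑ i, v i) • π with hudef
    have hAu : A *ᵥ u = 0 := by
      rw [hudef, mulVec_sub, mulVec_smul, hv, hAπ, smul_zero, sub_self]
    have husum : ∑ i, u i = 0 := by
      simp [hudef, Finset.sum_sub_distrib, ← Finset.mul_sum, hπΔ.2]
    have hune : u ≠ 0 := by
      intro h
      refine hvs (∑ i, v i) ?_
      have := sub_eq_zero.mp h
      exact this
    have hneg : ∃ i, u i < 0 := by
      by_contra h
      push_neg at h
      apply hune
      funext i
      exact (Finset.sum_eq_zero_iff_of_nonneg (fun j _ => h j)).mp husum i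
        (Finset.mem_univ i)
    obtain ⟨i₁, hi₁⟩ := hneg
    -- minimize π i / (-u i) over {i | u i < 0}
    set S : Finset (Fin n) := Finset.univ.filter (fun i => u i < 0) with hS
    have hSne : S.Nonempty := ⟨i₁, by simp [hS, hi₁]⟩
    obtain ⟨i₀, hi₀S, hi₀min⟩ := S.exists_min_image (fun i => π i / (-(u i))) hSne
    have hui₀ : u i₀ < 0 := by
      have := hi₀S
      simp [hS] at this
      exact this
    set t : ℝ := π i₀ / (-(u i₀)) with ht
    have ht0 : 0 < t := div_pos (hπpos i₀) (by linarith)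
    set w : Fin n → ℝ := π + t • u with hw
    have hwnn : ∀ i, 0 ≤ w i := by
      intro i
      simp only [hw, Pi.add_apply, Pi.smul_apply, smul_eq_mul]
      rcases le_or_gt 0 (u i) with h | h
      · have : 0 ≤ t * u i := mul_nonneg ht0.le h
        linarith [hπpos i]
      · have hiS : i ∈ S := by simp [hS, h]
        have hmin := hi₀min i hiS
        have : t * (-(u i)) ≤ π i := by
          rw [← le_div_iff₀ (by linarith : (0:ℝ) < -(u i))]
          exact hmin
        nlinarith
    have hwsum : ∑ i, w i = 1 := by
      simp [hw, Finset.sum_add_distrib, ← Finset.mul_sum, husum, hπΔ.2]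
    have hAw : A *ᵥ w = 0 := by
      rw [hw, mulVec_add, mulVec_smul, hAπ, hAu, smul_zero, add_zero]
    have hwnash : IsNashEq A w :=
      (nash_iff A hskew w).mpr ⟨hwsum, hwnn, fun j => by rw [hAw]; exact le_refl 0⟩
    have hwpos := hcm w hwnash i₀
    have hwzero : w i₀ = 0 := by
      have hne : -(u i₀) ≠ 0 := by linarith
      simp only [hw, Pi.add_apply, Pi.smul_apply, smul_eq_mul]
      rw [ht]
      field_simp
      rw [div_self (ne_of_lt hui₀)]
      ring
    rw [hwzero] at hwpos
    exact lt_irrefl 0 hwpos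
  have hπne : π ≠ 0 := by
    intro h
    have := hπpos ⟨0, by omega⟩
    rw [h] at this
    exact lt_irrefl 0 this
  have hkereq : LinearMap.ker A.mulVecLin = Submodule.span ℝ {π} := by
    apply le_antisymm
    · intro v hv
      rw [LinearMap.mem_ker, mulVecLin_apply] at hv
      obtain ⟨t, rfl⟩ := hker v hv
      exact Submodule.smul_mem _ t (Submodule.mem_span_singleton_self π)
    · rw [Submodule.span_le, Set.singleton_subset_iff]
      rw [SetLike.mem_coe, LinearMap.mem_ker, mulVecLin_apply]
      exact hAπ
  have hkerdim : Module.finrank ℝ (LinearMap.ker A.mulVecLin) = 1 := by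
    rw [hkereq]
    exact finrank_span_singleton hπne
  have hrn := LinearMap.finrank_range_add_finrank_ker A.mulVecLin
  rw [hkerdim] at hrn
  have hfr : Module.finrank ℝ (Fin n → ℝ) = n := by
    simp [Module.finrank_pi]
  rw [hfr] at hrn
  have : A.rank = Module.finrank ℝ (LinearMap.range A.mulVecLin) := rfl
  omega

end Aux

/-- Kaplansky: Let `A` be an `n×n` real skew-symmetric matrix, `n ≥ 2`.
If `n` is even, `A` is not non-redundant: some Nash equilibrium of `A` is not
completely mixed. If `n` is odd, `A` is non-redundant iff `rank(A) = n−1` and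
`xᵀA = 0ᵀ` has a solution `x` with every coordinate strictly positive. -/
theorem stmt19 (n : ℕ) (hn : 2 ≤ n)
    (A : Matrix (Fin n) (Fin n) ℝ) (hskew : Aᵀ = -A) :
    (Even n → ∃ π : Fin n → ℝ, IsNashEq A π ∧ ¬ ∀ i, 0 < π i) ∧
    (Odd n →
      ((∀ π : Fin n → ℝ, IsNashEq A π → ∀ i, 0 < π i) ↔
        (A.rank = n - 1 ∧ ∃ x : Fin n → ℝ, x ᵥ* A = 0 ∧ ∀ i, 0 < x i))) := by
  have hconv : ∀ x : Fin n → ℝ, x ᵥ* A = 0 ↔ A *ᵥ x = 0 := by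
    intro x
    rw [← mulVec_transpose, hskew, neg_mulVec, neg_eq_zero]
  constructor
  · -- even case
    intro hev
    by_contra hcon
    push_neg at hcon
    have hcm : ∀ π : Fin n → ℝ, IsNashEq A π → ∀ i, 0 < π i := by
      intro π hπ
      exact hcon π hπ
    obtain ⟨hrank, -⟩ := key_lemma hn A hskew hcm
    have heven := skew_rank_even A hskew
    rw [hrank] at heven
    obtain ⟨m, hm⟩ := hev
    obtain ⟨k, hk⟩ := heven
    omega
  · -- odd case
    intro _
    constructor
    · intro hcm
      obtain ⟨hrank, x, hx, hxpos⟩ := key_lemma hn A hskew hcm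
      exact ⟨hrank, x, (hconv x).mpr hx, hxpos⟩
    · rintro ⟨hrank, x, hxA, hxpos⟩
      have hAx : A *ᵥ x = 0 := (hconv x).mp hxA
      intro π hπ
      rw [nash_iff A hskew π] at hπ
      obtain ⟨hπ1, hπ2, hπ3⟩ := hπ
      -- x ⬝ᵥ (A *ᵥ π) = 0
      have hd : x ⬝ᵥ (A *ᵥ π) = 0 := by
        rw [dotProduct_mulVec, hxA, zero_dotProduct]
      have hAπ : A *ᵥ π = 0 := slack x (A *ᵥ π) hxpos hπ3 hd
      -- π ∈ ker = span {x}
      have hxne : x ≠ 0 := by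
        intro h
        have := hxpos ⟨0, by omega⟩
        rw [h] at this
        exact lt_irrefl 0 this
      have hkerdim : Module.finrank ℝ (LinearMap.ker A.mulVecLin) = 1 := by
        have hrn := LinearMap.finrank_range_add_finrank_ker A.mulVecLin
        have hfr : Module.finrank ℝ (Fin n → ℝ) = n := by
          simp [Module.finrank_pi]
        rw [hfr] at hrn
        have : A.rank = Module.finrank ℝ (LinearMap.range A.mulVecLin) := rfl
        omega
      have hle : Submodule.span ℝ {x} ≤ LinearMap.ker A.mulVecLin := by
        rw [Submodule.span_le, Set.singleton_subset_iff]
        rw [SetLike.mem_coe, LinearMap.mem_ker, mulVecLin_apply]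
        exact hAx
      have hkereq : Submodule.span ℝ {x} = LinearMap.ker A.mulVecLin := by
        apply Submodule.eq_of_le_of_finrank_le hle
        rw [hkerdim, finrank_span_singleton hxne]
      have hπker : π ∈ LinearMap.ker A.mulVecLin := by
        rw [LinearMap.mem_ker, mulVecLin_apply]
        exact hAπ
      rw [← hkereq] at hπker
      obtain ⟨t, ht⟩ := Submodule.mem_span_singleton.mp hπker
      have hxs : 0 < ∑ i, x i :=
        Finset.sum_pos (fun i _ => hxpos i) ⟨⟨0, by omega⟩, Finset.mem_univ _⟩
      have htv : t * ∑ i, x i = 1 := by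
        rw [← hπ1, ← ht]
        simp [Finset.mul_sum]
      have ht0 : 0 < t := by
        rcases lt_trichotomy t 0 with h | h | h
        · nlinarith
        · rw [h] at htv; simp at htv
        · exact h
      intro i
      rw [← ht]
      simp only [Pi.smul_apply, smul_eq_mul]
      exact mul_pos ht0 (hxpos i)
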